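/- Let ν > 0, let d ∈ ℝ with d ≠ 0, and let L ∈ ℂ with Re L = π/|d|. Set θ := 1/(1 + νL) (the denominator is nonzero since its real part exceeds 1). Then Re θ = (1 + νπ/|d|)·|θ|². Moreover, setting v := d/(2π), r_a := ν|θ|²/|v|, r_r := ν r_a/(4|v|), and r_t := 1 − Re(θ)·ν/|v| + ν r_a/(4|v|), one has r_a + r_t + r_r = 1. -/

import Mathlib

open Complex

/-- For `ν > 0`, `d ≠ 0`, `L ∈ ℂ` with `Re L = π/|d|`, `θ = 1/(1 + νL)`:
the denominator is nonzero, `Re θ = (1 + νπ/|d|)|θ|²`, and the rates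
`r_a = ν|θ|²/|v|`, `r_r = ν r_a/(4|v|)`, `r_t = 1 - Re(θ) ν/|v| + ν r_a/(4|v|)`
with `v = d/(2π)` sum to `1`. -/
theorem thermostat_rates_sum_one (ν d : ℝ) (hν : 0 < ν) (hd : d ≠ 0)
    (L : ℂ) (hL : L.re = Real.pi / |d|)
    (θ : ℂ) (hθ : θ = 1 / (1 + (ν : ℂ) * L))
    (v ra rt rr : ℝ)
    (hv : v = d / (2 * Real.pi))
    (hra : ra = ν * ‖θ‖ ^ 2 / |v|)
    (hrt : rt = 1 - θ.re * ν / |v| + ν * ra / (4 * |v|))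
    (hrr : rr = ν * ra / (4 * |v|)) :
    (1 + (ν : ℂ) * L) ≠ 0 ∧
    θ.re = (1 + ν * Real.pi / |d|) * ‖θ‖ ^ 2 ∧
    ra + rt + rr = 1 := by
  have hπ : (0:ℝ) < Real.pi := Real.pi_pos
  have hd' : (0:ℝ) < |d| := abs_pos.mpr hd
  have hre : (1 + (ν : ℂ) * L).re = 1 + ν * (Real.pi / |d|) := by
    simp [hL]
  have hpos : 0 < (1 + (ν : ℂ) * L).re := by
    rw [hre]; positivity
  have hw : (1 + (ν : ℂ) * L) ≠ 0 := by
    intro h; rw [h] at hpos; simp at hpos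
  have hns : Complex.normSq (1 + (ν : ℂ) * L) ≠ 0 := (Complex.normSq_pos.mpr hw).ne'
  have habs : ‖θ‖ ^ 2 = (Complex.normSq (1 + (ν : ℂ) * L))⁻¹ := by
    rw [hθ, Complex.sq_norm, one_div, map_inv₀]
  have hθre : θ.re = (1 + ν * (Real.pi / |d|)) * (Complex.normSq (1 + (ν : ℂ) * L))⁻¹ := by
    rw [hθ, one_div, Complex.inv_re, hre, div_eq_mul_inv]
  have h2 : θ.re = (1 + ν * Real.pi / |d|) * ‖θ‖ ^ 2 := by
    rw [hθre, habs]; ring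
  refine ⟨hw, h2, ?_⟩
  have hvabs : |v| = |d| / (2 * Real.pi) := by
    rw [hv, abs_div, abs_of_pos (by positivity : (0:ℝ) < 2 * Real.pi)]
  have hv' : |v| ≠ 0 := by rw [hvabs]; positivity
  rw [hrt, hrr, hra, h2, hvabs]
  field_simp
  ring
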